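/- Suppose f is a complex function analytic at a point a with f'(a) ≠ 0, and set b = f(a). Then f has a local analytic inverse f⁻¹ defined on a neighborhood of b, and on that neighborhood f⁻¹(z) = a + Σ_{n=1}^∞ c_n (z − b)^n, where c_n = (1/n!) · d^{n−1}/dw^{n−1} [ (w − a)/(f(w) − b) ]^n evaluated at w = a. -/

import Mathlib

open Filter Topology Metric Complex Real ENNReal

noncomputable section

private lemma analyticAt_deriv' {F : ℂ → ℂ} {w : ℂ} (h : AnalyticAt ℂ F w) :
    AnalyticAt ℂ (deriv F) w :=
  (AnalyticOnNhd.deriv (s := {w}) (fun _ hy => hy ▸ h)) w rfl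

private lemma analyticAt_zpow_comp {u : ℂ → ℂ} {w : ℂ} (hu : AnalyticAt ℂ u w)
    (hne : u w ≠ 0) (m : ℤ) : AnalyticAt ℂ (fun z => u z ^ m) w := by
  rcases m with k | k
  · simpa only [zpow_natCast, Int.ofNat_eq_natCast] using hu.fun_pow k
  · have := (hu.fun_pow (k + 1)).fun_inv (pow_ne_zero _ hne)
    simpa only [zpow_negSucc] using this

/-- The circle integral of the derivative of a function analytic near the circle vanishes. -/
private lemma circleIntegral_deriv_eq_zero' {F : ℂ → ℂ} {a : ℂ} {r : ℝ} (hr : 0 < r)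
    (hF : ∀ w ∈ sphere a r, AnalyticAt ℂ F w) :
    (∮ z in C(a, r), deriv F z) = 0 := by
  have key : ∀ θ ∈ Set.uIcc (0:ℝ) (2*π), HasDerivAt (fun t => F (circleMap a r t))
      (deriv (circleMap a r) θ • deriv F (circleMap a r θ)) θ := by
    intro θ _
    have hw : circleMap a r θ ∈ sphere a r := circleMap_mem_sphere a hr.le θ
    have h1 : HasDerivAt F (deriv F (circleMap a r θ)) (circleMap a r θ) :=
      ((hF _ hw).differentiableAt).hasDerivAt
    simpa [smul_eq_mul, mul_comm, Function.comp_def] using h1.comp θ (hasDerivAt_circleMap a r θ)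
  have hcont : ContinuousOn (fun θ => deriv (circleMap a r) θ • deriv F (circleMap a r θ))
      (Set.uIcc (0:ℝ) (2*π)) := by
    intro θ _
    apply ContinuousAt.continuousWithinAt
    apply ContinuousAt.fun_smul
    · have hd : deriv (circleMap a r) = fun θ => circleMap 0 r θ * I :=
        funext fun θ => deriv_circleMap a r θ
      rw [hd]
      exact ((continuous_circleMap 0 r).continuousAt).mul continuousAt_const
    · exact ((analyticAt_deriv' (hF _ (circleMap_mem_sphere a hr.le θ))).continuousAt).comp
        (continuous_circleMap a r).continuousAt
  have := intervalIntegral.integral_eq_sub_of_hasDerivAt key hcont.intervalIntegrable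
  rw [circleIntegral, this]
  have h2 : circleMap a r (2*π) = circleMap a r 0 := by
    simpa using (periodic_circleMap a r) 0
  rw [h2, sub_self]

/-- Cauchy's formula for Taylor coefficients, in `iteratedDeriv` form. -/
private lemma circleIntegral_inv_pow_mul {H : ℂ → ℂ} {a : ℂ} {r : ℝ} (hr : 0 < r)
    (hH : DifferentiableOn ℂ H (closedBall a r)) (m : ℕ) :
    (∮ z in C(a, r), ((z - a)⁻¹) ^ m * ((z - a)⁻¹ * H z)) =
      (2 * ↑π * I) * ((m.factorial : ℂ))⁻¹ * iteratedDeriv m H a := by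
  lift r to NNReal using hr.le with R
  have hR : (0 : NNReal) < R := by exact_mod_cast hr
  have hball : HasFPowerSeriesOnBall H (cauchyPowerSeries H a R) a R :=
    hH.hasFPowerSeriesOnBall hR
  have h1 : (m.factorial : ℂ) * (cauchyPowerSeries H a R m fun _ => (1:ℂ)) =
      iteratedDeriv m H a := by
    have h := hball.factorial_smul (y := (1:ℂ)) m
    rw [iteratedDeriv_eq_iteratedFDeriv]
    rw [nsmul_eq_mul] at h
    exact_mod_cast h
  have h2 := cauchyPowerSeries_apply H a R m 1
  simp only [smul_eq_mul, one_div] at h2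
  rw [h2] at h1
  rw [← h1]
  have hfac : ((m.factorial : ℂ)) ≠ 0 := by exact_mod_cast m.factorial_ne_zero
  field_simp [two_pi_I_ne_zero]

theorem lagrange_inversion (f : ℂ → ℂ) (a b : ℂ)
    (hf : AnalyticAt ℂ f a) (hf' : deriv f a ≠ 0) (hb : b = f a)
    (c : ℕ → ℂ)
    (hc : ∀ n : ℕ, 1 ≤ n → c n = (1 / (n.factorial : ℂ)) *
      iteratedDeriv (n - 1)
        (fun w =>
          (Function.update (fun w => (w - a) / (f w - b)) a (1 / deriv f a) w) ^ n) a) :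
    ∃ g : ℂ → ℂ, AnalyticAt ℂ g b ∧ (∀ᶠ w in 𝓝 a, g (f w) = w) ∧
      ∀ᶠ z in 𝓝 b, HasSum (fun n : ℕ => c (n + 1) * (z - b) ^ (n + 1)) (g z - a) := by
  obtain ⟨pf, hpf⟩ := id hf
  -- the local inverse `g`
  have hsd : HasStrictDerivAt f (deriv f a) a := by
    have h := hpf.hasStrictDerivAt
    rwa [← hpf.deriv] at h
  have e := hsd.hasStrictFDerivAt_equiv hf'
  set g : ℂ → ℂ := e.localInverse f _ a with hgdef
  have hleft : ∀ᶠ w in 𝓝 a, g (f w) = w := e.eventually_left_inverse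
  have hright : ∀ᶠ z in 𝓝 b, f (g z) = z := hb ▸ e.eventually_right_inverse
  have hga : g b = a := by rw [hb]; exact e.localInverse_apply_image
  have htendsto : Tendsto g (𝓝 b) (𝓝 a) := hb ▸ e.localInverse_tendsto
  have hgcont : ∀ᶠ z in 𝓝 b, ContinuousAt g z := by
    have htarget : (e.toOpenPartialHomeomorph f).target ∈ 𝓝 b := by
      rw [hb]
      exact (e.toOpenPartialHomeomorph f).open_target.mem_nhds e.image_mem_toOpenPartialHomeomorph_target
    filter_upwards [htarget] with z hz
    rw [hgdef, e.localInverse_def]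
    exact (e.toOpenPartialHomeomorph f).continuousAt_symm hz
  have hfev : ∀ᶠ w in 𝓝 a, DifferentiableAt ℂ f w ∧ deriv f w ≠ 0 := by
    filter_upwards [hf.eventually_analyticAt,
      (analyticAt_deriv' hf).continuousAt.eventually_ne hf'] with w hw hw'
    exact ⟨hw.differentiableAt, hw'⟩
  have hgan : AnalyticAt ℂ g b := by
    rw [analyticAt_iff_eventually_differentiableAt]
    filter_upwards [hgcont, htendsto.eventually hfev, hright.eventually_nhds] with z hcz hz hz3
    exact (HasDerivAt.of_local_left_inverse hcz hz.1.hasDerivAt hz.2 hz3).differentiableAt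
  obtain ⟨p, hps⟩ := id hgan
  obtain ⟨R, hp⟩ := hps
  obtain ⟨ρ, hρ0, hρR⟩ := ENNReal.lt_iff_exists_nnreal_btwn.1 hp.r_pos
  have hρ0' : 0 < (ρ : ℝ) := by exact_mod_cast hρ0
  have hsum : Summable (fun k => ‖p k‖ * (ρ:ℝ)^k) := p.summable_norm_mul_pow (hρR.trans_le hp.r_le)
  -- dslope facts
  have hφ : AnalyticAt ℂ (dslope f a) a := (hpf.has_fpower_series_dslope_fslope).analyticAt
  have hφa : dslope f a a = deriv f a := dslope_same f a
  have hkey : ∀ w, f w - b = (w - a) * dslope f a w := by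
    intro w
    rcases eq_or_ne w a with rfl | hw
    · simp [hb]
    · rw [dslope_of_ne f hw, slope_def_field, hb, mul_div_cancel₀ _ (sub_ne_zero.2 hw)]
  -- a good neighborhood of `a`
  have hEv : ∀ᶠ w in 𝓝 a, AnalyticAt ℂ f w ∧ AnalyticAt ℂ (dslope f a) w ∧ dslope f a w ≠ 0
      ∧ g (f w) = w ∧ edist (f w) b < (ρ : ℝ≥0∞) := by
    have h5 : ∀ᶠ w in 𝓝 a, f w ∈ EMetric.ball b (ρ : ℝ≥0∞) := by
      have htf : Tendsto f (𝓝 a) (𝓝 b) := hb ▸ hf.continuousAt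
      exact htf (EMetric.ball_mem_nhds b (by exact_mod_cast hρ0))
    filter_upwards [hf.eventually_analyticAt, hφ.eventually_analyticAt,
      hφ.continuousAt.eventually_ne (hφa ▸ hf'), hleft, h5] with w h1 h2 h3 h4 h5
    exact ⟨h1, h2, h3, h4, h5⟩
  obtain ⟨U, hU, hUo, haU⟩ := _root_.eventually_nhds_iff.1 hEv
  obtain ⟨r, hr0, hrU⟩ : ∃ r > 0, closedBall a r ⊆ U := by
    rcases Metric.nhds_basis_closedBall.mem_iff.1 (hUo.mem_nhds haU) with ⟨r, hr0, hrU⟩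
    exact ⟨r, hr0, hrU⟩
  have hsub : sphere a r ⊆ U := fun w hw => hrU (sphere_subset_closedBall hw)
  have hwa' : ∀ w ∈ sphere a r, w ≠ a := by
    intro w hw h
    subst h
    rw [mem_sphere, dist_self] at hw
    exact hr0.ne hw
  have hfb_ne : ∀ w ∈ sphere a r, f w - b ≠ 0 := by
    intro w hw
    rw [hkey w]
    exact mul_ne_zero (sub_ne_zero.2 (hwa' w hw)) (hU w (hsub hw)).2.2.1
  -- bounds on the circle
  have hsne : (sphere a r).Nonempty := NormedSpace.sphere_nonempty.2 hr0.le
  have hcont_fb : ContinuousOn (fun w => ‖f w - b‖) (sphere a r) := by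
    intro w hw
    exact (((hU w (hsub hw)).1.continuousAt.sub continuousAt_const).norm).continuousWithinAt
  obtain ⟨w₀, hw₀s, hw₀min⟩ := (isCompact_sphere a r).exists_isMinOn hsne hcont_fb
  set δ : ℝ := ‖f w₀ - b‖ with hδdef
  have hδ0 : 0 < δ := norm_pos_iff.2 (hfb_ne w₀ hw₀s)
  have hδle : ∀ w ∈ sphere a r, δ ≤ ‖f w - b‖ := fun w hw => hw₀min hw
  have hub : ∀ w ∈ sphere a r, ‖f w - b‖ ≤ (ρ : ℝ) := by
    intro w hw
    have h := (hU w (hsub hw)).2.2.2.2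
    rw [edist_nndist, nndist_eq_nnnorm, ENNReal.coe_lt_coe] at h
    exact_mod_cast h.le
  obtain ⟨M, hM⟩ := (isCompact_sphere a r).exists_bound_of_continuousOn
    (fun w hw => ((analyticAt_deriv' (hU w (hsub hw)).1).continuousAt).continuousWithinAt)
  have hM0 : 0 ≤ M := le_trans (norm_nonneg _) (hM w₀ hw₀s)
  -- the coefficient identity
  have key : ∀ n : ℕ, 1 ≤ n → p.coeff n = c n := by
    intro n hn
    have hnz : ((n:ℂ)) ≠ 0 := Nat.cast_ne_zero.2 (by omega)
    -- A: the power series of `g` evaluated along the circle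
    have hA : ∀ w ∈ sphere a r, HasSum (fun k => p.coeff k * (f w - b)^k) w := by
      intro w hw
      have hwU := hU w (hsub hw)
      have hmem : f w - b ∈ EMetric.ball (0:ℂ) R := by
        rw [EMetric.ball, Metric.mem_eball, edist_nndist, nndist_eq_nnnorm, sub_zero]
        calc ((‖f w - b‖₊ : ℝ≥0∞)) = edist (f w) b := by rw [edist_nndist, nndist_eq_nnnorm]
        _ < (ρ : ℝ≥0∞) := hwU.2.2.2.2
        _ < R := hρR
      have hs := hp.hasSum hmem
      simp only [FormalMultilinearSeries.apply_eq_pow_smul_coeff, smul_eq_mul] at hs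
      have hbz : b + (f w - b) = f w := by ring
      rw [hbz, hwU.2.2.2.1] at hs
      have hzz : (fun k => (f w - b)^k * p.coeff k) = fun k => p.coeff k * (f w - b)^k :=
        funext fun k => mul_comm _ _
      rwa [hzz] at hs
    -- A': the multiplied series
    have hA' : ∀ w ∈ sphere a r, HasSum
        (fun k => p.coeff k * ((n:ℂ) * deriv f w * (f w - b)^((k:ℤ) - n - 1)))
        ((n:ℂ) * deriv f w * (f w - b)^(-(n:ℤ) - 1) * w) := by
      intro w hw
      have hne := hfb_ne w hw
      have hs := (hA w hw).mul_left ((n:ℂ) * deriv f w * (f w - b)^(-(n:ℤ) - 1))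
      have heq : (fun k => ((n:ℂ) * deriv f w * (f w - b)^(-(n:ℤ) - 1)) * (p.coeff k * (f w - b)^k))
          = fun k => p.coeff k * ((n:ℂ) * deriv f w * (f w - b)^((k:ℤ) - n - 1)) := by
        funext k
        rw [show ((k:ℤ) - n - 1) = ((k:ℕ):ℤ) + (-(n:ℤ) - 1) by ring, zpow_add₀ hne, zpow_natCast]
        ring
      rwa [heq] at hs
    have hdC : Continuous (fun θ => deriv (circleMap a r) θ) := by
      have hd : deriv (circleMap a r) = fun θ => circleMap 0 r θ * I :=
        funext fun θ => deriv_circleMap a r θ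
      rw [hd]
      exact (continuous_circleMap 0 r).mul continuous_const
    -- B: swapping sum and integral
    have hswap : HasSum
        (fun k => ∮ z in C(a, r), p.coeff k * ((n:ℂ) * deriv f z * (f z - b)^((k:ℤ) - n - 1)))
        (∮ z in C(a, r), (n:ℂ) * deriv f z * (f z - b)^(-(n:ℤ) - 1) * z) := by
      simp only [circleIntegral]
      refine intervalIntegral.hasSum_integral_of_dominated_convergence
        (fun k _ => ‖p k‖ * (ρ:ℝ)^k * (r * (n * M / δ^(n+1)))) (fun k => ?_) (fun k => ?_)
        ?_ ?_ ?_
      · apply Continuous.aestronglyMeasurable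
        apply hdC.smul
        rw [continuous_iff_continuousAt]
        intro θ
        have hw : circleMap a r θ ∈ sphere a r := circleMap_mem_sphere a hr0.le θ
        have hwU := hU _ (hsub hw)
        have hG : ContinuousAt
            (fun w => p.coeff k * ((n:ℂ) * deriv f w * (f w - b) ^ ((k:ℤ) - (n:ℤ) - 1)))
            (circleMap a r θ) :=
          continuousAt_const.mul ((continuousAt_const.mul
            (analyticAt_deriv' hwU.1).continuousAt).mul
            ((hwU.1.continuousAt.sub continuousAt_const).zpow₀ _ (Or.inl (hfb_ne _ hw))))
        exact hG.comp (continuous_circleMap a r).continuousAt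
      · refine Eventually.of_forall fun θ _ => ?_
        set w := circleMap a r θ with hwdef
        have hw : w ∈ sphere a r := circleMap_mem_sphere a hr0.le θ
        have hne := hfb_ne w hw
        have hnc : ‖deriv (circleMap a r) θ‖ = r := by
          rw [deriv_circleMap, norm_mul, Complex.norm_I, mul_one,
            norm_circleMap_zero, abs_of_pos hr0]
        have hco : ‖p.coeff k‖ ≤ ‖p k‖ := by
          calc ‖p.coeff k‖ = ‖p k (fun _ => (1:ℂ))‖ := rfl
          _ ≤ ‖p k‖ * ∏ _i : Fin k, ‖(1:ℂ)‖ := (p k).le_opNorm _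
          _ = ‖p k‖ := by simp
        have hzn : ‖(f w - b) ^ ((k:ℤ) - n - 1)‖ = ‖f w - b‖^k / ‖f w - b‖^(n+1) := by
          rw [show ((k:ℤ) - n - 1) = (k:ℤ) - ((n+1 : ℕ) : ℤ) by push_cast; ring,
            zpow_sub₀ hne, zpow_natCast, zpow_natCast, norm_div, norm_pow, norm_pow]
        have hfw : ‖f w - b‖^k ≤ (ρ:ℝ)^k := pow_le_pow_left₀ (norm_nonneg _) (hub w hw) k
        have hδn : δ^(n+1) ≤ ‖f w - b‖^(n+1) := pow_le_pow_left₀ hδ0.le (hδle w hw) (n+1)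
        have hfd : ‖deriv f w‖ ≤ M := hM w hw
        rw [norm_smul, hnc]
        rw [norm_mul, norm_mul, norm_mul, hzn, Complex.norm_natCast]
        calc r * (‖p.coeff k‖ * ((n : ℝ) * ‖deriv f w‖ * (‖f w - b‖^k / ‖f w - b‖^(n+1))))
            ≤ r * (‖p k‖ * ((n : ℝ) * M * ((ρ:ℝ)^k / δ^(n+1)))) := by
              have h1 : ‖f w - b‖^k / ‖f w - b‖^(n+1) ≤ (ρ:ℝ)^k / δ^(n+1) :=
                div_le_div₀ (by positivity) hfw (by positivity) hδn
              have h2 : (n : ℝ) * ‖deriv f w‖ * (‖f w - b‖^k / ‖f w - b‖^(n+1))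
                  ≤ (n : ℝ) * M * ((ρ:ℝ)^k / δ^(n+1)) := by
                apply mul_le_mul (by gcongr) h1 (by positivity)
                positivity
              apply mul_le_mul_of_nonneg_left _ hr0.le
              apply mul_le_mul hco h2 (by positivity) (norm_nonneg _)
          _ = ‖p k‖ * (ρ:ℝ)^k * (r * ((n : ℝ) * M / δ^(n+1))) := by ring
      · exact Eventually.of_forall fun θ _ => (hsum.mul_right _)
      · exact intervalIntegrable_const
      · refine Eventually.of_forall fun θ _ => ?_
        have hw : circleMap a r θ ∈ sphere a r := circleMap_mem_sphere a hr0.le θ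
        simpa only [smul_eq_mul] using (hA' _ hw).mul_left (deriv (circleMap a r) θ)
    -- C0: the terms with k ≠ n integrate to zero
    have hC0 : ∀ k : ℕ, k ≠ n →
        (∮ z in C(a, r), p.coeff k * ((n:ℂ) * deriv f z * (f z - b)^((k:ℤ) - n - 1))) = 0 := by
      intro k hk
      have hkn : ((k:ℂ) - n) ≠ 0 := sub_ne_zero.2 (by exact_mod_cast hk)
      set Fk : ℂ → ℂ := fun w => (p.coeff k * n / ((k:ℂ) - n)) * (f w - b)^((k:ℤ) - n) with hFk
      have hder : ∀ w ∈ sphere a r,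
          HasDerivAt Fk (p.coeff k * ((n:ℂ) * deriv f w * (f w - b)^((k:ℤ) - n - 1))) w := by
        intro w hw
        have hwU := hU w (hsub hw)
        have hne := hfb_ne w hw
        have h1 : HasDerivAt (fun w => f w - b) (deriv f w) w :=
          (hwU.1.differentiableAt.hasDerivAt).sub_const b
        have h2 := (hasDerivAt_zpow ((k:ℤ) - n) (f w - b) (Or.inl hne)).comp w h1
        have h3 := h2.const_mul (p.coeff k * (n:ℂ) / ((k:ℂ) - n))
        refine HasDerivAt.congr_deriv h3 ?_
        push_cast
        field_simp
      have hEq : Set.EqOn (fun z => p.coeff k * ((n:ℂ) * deriv f z * (f z - b)^((k:ℤ) - n - 1)))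
          (deriv Fk) (sphere a r) := fun w hw => ((hder w hw).deriv).symm
      rw [circleIntegral.integral_congr hr0.le hEq]
      refine circleIntegral_deriv_eq_zero' hr0 (fun w hw => ?_)
      exact analyticAt_const.mul
        (analyticAt_zpow_comp ((hU w (hsub hw)).1.sub analyticAt_const) (hfb_ne w hw) _)
    -- Cn: the term with k = n
    have hCn : (∮ z in C(a, r), p.coeff n * ((n:ℂ) * deriv f z * (f z - b)^((n:ℤ) - n - 1)))
        = (2*(π:ℝ)*I) * ((n:ℂ) * p.coeff n) := by
      have hEq : Set.EqOn (fun z => p.coeff n * ((n:ℂ) * deriv f z * (f z - b)^((n:ℤ) - n - 1)))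
          (fun z => (z - a)⁻¹ • (p.coeff n * (n:ℂ) * deriv f z * (dslope f a z)⁻¹))
          (sphere a r) := by
        intro w hw
        have hne := hfb_ne w hw
        simp only [smul_eq_mul]
        rw [show ((n:ℤ) - n - 1) = -1 by ring]
        rw [zpow_neg_one, hkey w, mul_inv]
        ring
      rw [circleIntegral.integral_congr hr0.le hEq]
      have hdo : DifferentiableOn ℂ (fun z => p.coeff n * (n:ℂ) * deriv f z * (dslope f a z)⁻¹)
          (closure (ball a r)) := by
        rw [closure_ball a hr0.ne']
        intro w hw
        have hwU := hU w (hrU hw)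
        exact (((analyticAt_const.mul (analyticAt_deriv' hwU.1)).mul
          (hwU.2.1.inv hwU.2.2.1)).differentiableAt).differentiableWithinAt
      have hval := hdo.diffContOnCl.circleIntegral_sub_inv_smul (mem_ball_self hr0)
      rw [hval, smul_eq_mul, dslope_same]
      rw [mul_assoc (p.coeff n * (n:ℂ)), mul_inv_cancel₀ hf', mul_one]
      ring
    -- J: the value of the series of integrals
    have hJ : (∮ z in C(a, r), (n:ℂ) * deriv f z * (f z - b)^(-(n:ℤ) - 1) * z)
        = (2*(π:ℝ)*I) * ((n:ℂ) * p.coeff n) := by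
      have h1 : HasSum
          (fun k => ∮ z in C(a, r), p.coeff k * ((n:ℂ) * deriv f z * (f z - b)^((k:ℤ) - n - 1)))
          (∮ z in C(a, r), p.coeff n * ((n:ℂ) * deriv f z * (f z - b)^((n:ℤ) - n - 1))) :=
        hasSum_single n (fun k hk => hC0 k hk)
      rw [← hCn]
      exact hswap.unique h1
    -- D: integration by parts
    have hI : (∮ z in C(a, r), (f z - b)^(-(n:ℤ))) = (2*(π:ℝ)*I) * ((n:ℂ) * p.coeff n) := by
      rw [← hJ]
      set Fd : ℂ → ℂ := fun w => w * (f w - b)^(-(n:ℤ)) with hFd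
      have hder : ∀ w ∈ sphere a r, HasDerivAt Fd
          ((f w - b)^(-(n:ℤ)) - (n:ℂ) * deriv f w * (f w - b)^(-(n:ℤ) - 1) * w) w := by
        intro w hw
        have hwU := hU w (hsub hw)
        have hne := hfb_ne w hw
        have h1 : HasDerivAt (fun w => f w - b) (deriv f w) w :=
          (hwU.1.differentiableAt.hasDerivAt).sub_const b
        have h2 := (hasDerivAt_zpow (-(n:ℤ)) (f w - b) (Or.inl hne)).comp w h1
        have h3 := (hasDerivAt_id w).mul h2
        simp only [Function.comp_def, id_eq, one_mul] at h3
        refine HasDerivAt.congr_deriv h3 ?_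
        push_cast
        ring
      have hsub_int : (∮ z in C(a, r),
          ((f z - b)^(-(n:ℤ)) - (n:ℂ) * deriv f z * (f z - b)^(-(n:ℤ) - 1) * z)) = 0 := by
        have hEq : Set.EqOn
            (fun z => (f z - b)^(-(n:ℤ)) - (n:ℂ) * deriv f z * (f z - b)^(-(n:ℤ) - 1) * z)
            (deriv Fd) (sphere a r) := fun w hw => ((hder w hw).deriv).symm
        rw [circleIntegral.integral_congr hr0.le hEq]
        refine circleIntegral_deriv_eq_zero' hr0 (fun w hw => ?_)
        exact analyticAt_id.mul
          (analyticAt_zpow_comp ((hU w (hsub hw)).1.sub analyticAt_const) (hfb_ne w hw) _)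
      have hint1 : CircleIntegrable (fun z => (f z - b)^(-(n:ℤ))) a r := by
        apply ContinuousOn.circleIntegrable hr0.le
        intro w hw
        exact (((hU w (hsub hw)).1.continuousAt.sub continuousAt_const).zpow₀ _
          (Or.inl (hfb_ne w hw))).continuousWithinAt
      have hint2 : CircleIntegrable (fun z => (n:ℂ) * deriv f z * (f z - b)^(-(n:ℤ) - 1) * z)
          a r := by
        apply ContinuousOn.circleIntegrable hr0.le
        intro w hw
        have hwU := hU w (hsub hw)
        exact ((((continuousAt_const.mul (analyticAt_deriv' hwU.1).continuousAt).mul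
          ((hwU.1.continuousAt.sub continuousAt_const).zpow₀ _
          (Or.inl (hfb_ne w hw)))).mul continuousAt_id)).continuousWithinAt
      have h4 : (∮ z in C(a, r), (f z - b)^(-(n:ℤ)))
          - (∮ z in C(a, r), (n:ℂ) * deriv f z * (f z - b)^(-(n:ℤ) - 1) * z) = 0 := by
        rw [← circleIntegral.integral_sub hint1 hint2]
        exact hsub_int
      exact sub_eq_zero.1 h4
    -- E: residue computation via Cauchy coefficients
    set H : ℂ → ℂ := fun z => ((dslope f a z)⁻¹)^n with hHdef
    have hHdiff : DifferentiableOn ℂ H (closedBall a r) := by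
      intro w hw
      have hwU := hU w (hrU hw)
      exact ((hwU.2.1.inv hwU.2.2.1).pow n).differentiableAt.differentiableWithinAt
    have hn1 : n - 1 + 1 = n := Nat.succ_pred_eq_of_pos hn
    have hEqE : Set.EqOn (fun z => (f z - b)^(-(n:ℤ)))
        (fun z => ((z - a)⁻¹)^(n-1) * ((z - a)⁻¹ * H z)) (sphere a r) := by
      intro w hw
      simp only
      rw [hkey w]
      calc ((w - a) * dslope f a w)^(-(n:ℤ))
          = ((w - a)^(n:ℕ))⁻¹ * ((dslope f a w)^(n:ℕ))⁻¹ := by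
            rw [mul_zpow, zpow_neg, zpow_neg, zpow_natCast, zpow_natCast]
        _ = ((w - a)⁻¹)^n * ((dslope f a w)⁻¹)^n := by rw [inv_pow, inv_pow]
        _ = ((w - a)⁻¹)^(n-1) * ((w - a)⁻¹ * H w) := by
            rw [hHdef]
            rw [show ((w - a)⁻¹)^n = ((w - a)⁻¹)^(n-1+1) by rw [hn1], pow_succ]
            ring
    have hIc : (∮ z in C(a, r), (f z - b)^(-(n:ℤ))) = (2*(π:ℝ)*I) * ((n:ℂ) * c n) := by
      rw [circleIntegral.integral_congr hr0.le hEqE, circleIntegral_inv_pow_mul hr0 hHdiff (n-1)]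
      have hupd : (fun w =>
          (Function.update (fun w => (w - a) / (f w - b)) a (1 / deriv f a) w) ^ n) = H := by
        funext w
        rcases eq_or_ne w a with rfl | hw
        · rw [Function.update_self]
          simp only [hHdef]
          rw [dslope_same, one_div]
        · rw [Function.update_of_ne hw]
          simp only [hHdef]
          rw [dslope_of_ne f hw, slope_def_field, hb, inv_div]
      have hcn := hc n hn
      rw [hupd] at hcn
      have hit : iteratedDeriv (n-1) H a = (n.factorial : ℂ) * c n := by
        rw [hcn]
        have : (n.factorial : ℂ) ≠ 0 := by exact_mod_cast n.factorial_ne_zero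
        field_simp
      rw [hit]
      have hfacs : (n.factorial : ℂ) = (n:ℂ) * (((n-1).factorial : ℕ) : ℂ) := by
        rw_mod_cast [Nat.mul_factorial_pred (by omega)]
      rw [hfacs]
      have hfne : (((n-1).factorial : ℕ) : ℂ) ≠ 0 := by exact_mod_cast (n-1).factorial_ne_zero
      field_simp
    have hfin : (2*(π:ℝ)*I) * ((n:ℂ) * p.coeff n) = (2*(π:ℝ)*I) * ((n:ℂ) * c n) := by
      rw [← hI, hIc]
    exact mul_left_cancel₀ hnz (mul_left_cancel₀ two_pi_I_ne_zero hfin)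
  -- conclusion
  refine ⟨g, hgan, hleft, ?_⟩
  have hball : EMetric.ball b R ∈ 𝓝 b := EMetric.ball_mem_nhds b hp.r_pos
  filter_upwards [hball] with z hz
  have hmem : z - b ∈ EMetric.ball (0:ℂ) R := by
    rw [EMetric.ball, Metric.mem_eball, edist_nndist, nndist_eq_nnnorm, sub_zero]
    rw [EMetric.ball, Metric.mem_eball, edist_nndist, nndist_eq_nnnorm] at hz
    exact hz
  have hsz := hp.hasSum hmem
  simp only [FormalMultilinearSeries.apply_eq_pow_smul_coeff, smul_eq_mul] at hsz
  have hbz : b + (z - b) = z := by ring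
  rw [hbz] at hsz
  have hzz : (fun k => (z - b)^k * p.coeff k) = fun k => p.coeff k * (z - b)^k :=
    funext fun k => mul_comm _ _
  rw [hzz] at hsz
  have h0 : p.coeff 0 = a := by
    have h := hp.coeff_zero (fun _ => (1:ℂ))
    rw [hga] at h
    exact h
  have hs1 := (hasSum_nat_add_iff' 1).2 hsz
  simp only [Finset.range_one, Finset.sum_singleton, pow_zero, mul_one, h0] at hs1
  have : (fun k => p.coeff (k + 1) * (z - b) ^ (k + 1))
      = fun k => c (k + 1) * (z - b) ^ (k + 1) := by
    funext k
    rw [key (k + 1) (Nat.succ_le_succ (Nat.zero_le k))]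
  rwa [this] at hs1
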